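/- The 4×4 matrix M with rows (1,−1,0,−1), (−1,2,1,0), (0,1,1,−1), (−1,0,−1,2) is positive semidefinite of rank 2 and extremal in the cone of 4×4 PSD matrices with zero (1,3) and (2,4) entries. -/

import Mathlib

open Matrix BigOperators

/-- The cone of real positive semidefinite matrices with zeros at nonedges of a graph
with adjacency relation `Adj`. -/
def psdCone {n : Type*} [Fintype n] (Adj : n → n → Prop) : Set (Matrix n n ℝ) :=
  {X | X.PosSemidef ∧ ∀ i j, i ≠ j → ¬ Adj i j → X i j = 0}

/-- `X` lies on an extreme ray of the convex cone `S`: it belongs to `S` and whenever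
`X = A + B` with `A, B ∈ S`, both `A` and `B` are nonnegative multiples of `X`. -/
def IsExtremalIn {n : Type*} [Fintype n] (S : Set (Matrix n n ℝ)) (X : Matrix n n ℝ) : Prop :=
  X ∈ S ∧ ∀ A B : Matrix n n ℝ, A ∈ S → B ∈ S → X = A + B →
    (∃ c : ℝ, 0 ≤ c ∧ A = c • X) ∧ (∃ d : ℝ, 0 ≤ d ∧ B = d • X)

/-- The cone `S^4_⪰0(C_4)` of PSD matrices vanishing at the nonedges `{1,3}` and `{2,4}`
of the 4-cycle (0-based: entries `(0,2)` and `(1,3)`). -/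
def c4Cone : Set (Matrix (Fin 4) (Fin 4) ℝ) :=
  {X | X.PosSemidef ∧ X 0 2 = 0 ∧ X 2 0 = 0 ∧ X 1 3 = 0 ∧ X 3 1 = 0}

def M13 : Matrix (Fin 4) (Fin 4) ℝ :=
  !![1, -1, 0, -1; -1, 2, 1, 0; 0, 1, 1, -1; -1, 0, -1, 2]

def N13 : Matrix (Fin 2) (Fin 4) ℝ := !![1, -1, 0, -1; 0, 1, 1, -1]

lemma N13T : N13ᴴ = !![1, 0; -1, 1; 0, 1; -1, -1] := by
  ext i j
  fin_cases i <;> fin_cases j <;> simp [N13]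

lemma M13_eq : M13 = N13ᴴ * N13 := by
  rw [N13T]
  ext i j
  fin_cases i <;> fin_cases j <;>
    simp [M13, N13, Matrix.mul_apply, Matrix.conjTranspose_apply, Matrix.transpose_apply, Fin.sum_univ_succ] <;> norm_num

lemma M13_psd : M13.PosSemidef := M13_eq ▸ posSemidef_conjTranspose_mul_self N13

lemma NNt : N13 * N13ᴴ = !![3, 0; 0, 3] := by
  rw [N13T]
  ext i j
  fin_cases i <;> fin_cases j <;>
    simp [N13, Matrix.mul_apply, Matrix.conjTranspose_apply, Matrix.transpose_apply, Fin.sum_univ_four] <;> norm_num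

lemma M13_rank : M13.rank = 2 := by
  have h1 : M13.rank = N13.rank := by rw [M13_eq]; exact N13.rank_conjTranspose_mul_self
  have h2 : N13.rank ≤ 2 := by
    simpa using N13.rank_le_card_height
  have h3 : (2 : ℕ) ≤ N13.rank := by
    have hu : IsUnit (!![3, 0; 0, 3] : Matrix (Fin 2) (Fin 2) ℝ) := by
      rw [Matrix.isUnit_iff_isUnit_det]
      simp [Matrix.det_fin_two]
    have := Matrix.rank_mul_le_left N13 N13ᴴ
    rw [NNt, Matrix.rank_of_isUnit _ hu] at this
    simpa using this
  omega

lemma psd_mulVec_eq_zero {A : Matrix (Fin 4) (Fin 4) ℝ} (hA : A.PosSemidef)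
    {x : Fin 4 → ℝ} (h : x ⬝ᵥ A.mulVec x = 0) : A.mulVec x = 0 := by
  exact (hA.dotProduct_mulVec_zero_iff x).mp (by simpa using h)

lemma psd_diag_nonneg {A : Matrix (Fin 4) (Fin 4) ℝ} (hA : A.PosSemidef) (i : Fin 4) :
    0 ≤ A i i := by
  have := hA.2 (Finsupp.single i 1)
  simpa [dotProduct, Matrix.mulVec, Pi.single_apply] using this

lemma cone_scalar {A : Matrix (Fin 4) (Fin 4) ℝ} (hA : A ∈ c4Cone)
    (hx : A.mulVec ![-1, -1, 1, 0] = 0) (hy : A.mulVec ![2, 1, 0, 1] = 0) :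
    A = A 0 0 • M13 := by
  obtain ⟨hpsd, h02, h20, h13, h31⟩ := hA
  have hs : ∀ i j : Fin 4, A j i = A i j := fun i j => by
    simpa using hpsd.1.apply i j
  have e0 := congrFun hx 0
  have e1 := congrFun hx 1
  have e2 := congrFun hx 2
  have e3 := congrFun hx 3
  have f0 := congrFun hy 0
  have f1 := congrFun hy 1
  have f2 := congrFun hy 2
  have f3 := congrFun hy 3
  simp [Matrix.mulVec, dotProduct, Fin.sum_univ_four] at e0 e1 e2 e3 f0 f1 f2 f3
  have s10 := hs 0 1; have s20 := hs 0 2; have s30 := hs 0 3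
  have s21 := hs 1 2; have s31 := hs 1 3; have s32 := hs 2 3
  ext i j
  fin_cases i <;> fin_cases j <;>
    simp [M13] <;> linarith

/-- The matrix with rows `(1,-1,0,-1), (-1,2,1,0), (0,1,1,-1), (-1,0,-1,2)` is PSD of
rank 2 and extremal in the cone of 4×4 PSD matrices with zero `(1,3)` and `(2,4)`
entries. -/
theorem M13_extremal :
    M13.PosSemidef ∧ M13.rank = 2 ∧ IsExtremalIn c4Cone M13 := by

  refine ⟨M13_psd, M13_rank, ⟨⟨M13_psd, by norm_num [M13] <;> rfl, by norm_num [M13] <;> rfl,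
    by norm_num [M13] <;> rfl, by norm_num [M13] <;> rfl⟩, ?_⟩⟩
  intro A B hA hB hAB
  have hMx : M13.mulVec ![-1, -1, 1, 0] = 0 := by
    ext i; fin_cases i <;>
      simp [Matrix.mulVec, dotProduct, Fin.sum_univ_four, M13] <;> norm_num
  have hMy : M13.mulVec ![2, 1, 0, 1] = 0 := by
    ext i; fin_cases i <;>
      simp [Matrix.mulVec, dotProduct, Fin.sum_univ_four, M13] <;> norm_num
  have key : ∀ x : Fin 4 → ℝ, M13.mulVec x = 0 → A.mulVec x = 0 ∧ B.mulVec x = 0 := by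
    intro x hMxv
    have hsum : x ⬝ᵥ A.mulVec x + x ⬝ᵥ B.mulVec x = 0 := by
      rw [← dotProduct_add, ← Matrix.add_mulVec, ← hAB, hMxv, dotProduct_zero]
    have hAx : (0:ℝ) ≤ x ⬝ᵥ A.mulVec x := by simpa using hA.1.dotProduct_mulVec_nonneg x
    have hBx : (0:ℝ) ≤ x ⬝ᵥ B.mulVec x := by simpa using hB.1.dotProduct_mulVec_nonneg x
    exact ⟨psd_mulVec_eq_zero hA.1 (by linarith), psd_mulVec_eq_zero hB.1 (by linarith)⟩
  obtain ⟨hAx, hBx⟩ := key _ hMx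
  obtain ⟨hAy, hBy⟩ := key _ hMy
  exact ⟨⟨A 0 0, psd_diag_nonneg hA.1 0, cone_scalar hA hAx hAy⟩,
    ⟨B 0 0, psd_diag_nonneg hB.1 0, cone_scalar hB hBx hBy⟩⟩
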